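/- Let (X, d, T) be a topological dynamical system (X compact metric, T : X → X continuous). A pair (x, y) ∈ X × X satisfies: there exists a set S ⊆ ℕ of upper density 1 with d(T^n x, T^n y) → 0 along S, and there exist s > 0 and a set S' of positive upper density with d(T^n x, T^n y) ≥ s for all n ∈ S', if and only if liminf_{N→∞} (1/N) ∑_{n=1}^N d(T^n x, T^n y) = 0 and limsup_{N→∞} (1/N) ∑_{n=1}^N d(T^n x, T^n y) > 0. -/

import Mathlib

open Filter
open scoped Classical

/-- Upper density of a set of natural numbers: `limsup_N #(S ∩ [1,N]) / N`. -/
noncomputable def upperDensity (S : Set ℕ) : ℝ :=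
  Filter.limsup (fun N : ℕ => (((Finset.Icc 1 N).filter (fun n => n ∈ S)).card : ℝ) / N)
    Filter.atTop

namespace DC2Aux

lemma bddBelow' (u : ℕ → ℝ) (hb : ∀ n, 0 ≤ u n) : IsBoundedUnder (· ≥ ·) atTop u :=
  isBoundedUnder_of ⟨0, fun n => hb n⟩
lemma bddAbove' (u : ℕ → ℝ) (M : ℝ) (hb : ∀ n, u n ≤ M) : IsBoundedUnder (· ≤ ·) atTop u :=
  isBoundedUnder_of ⟨M, fun n => hb n⟩

lemma myliminf_le (u : ℕ → ℝ) (b : ℝ) (h : ∃ᶠ n in atTop, u n ≤ b) (hb : ∀ n, 0 ≤ u n) :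
    liminf u atTop ≤ b :=
  liminf_le_of_frequently_le h (bddBelow' u hb)
lemma myle_limsup (u : ℕ → ℝ) (b : ℝ) (h : ∃ᶠ n in atTop, b ≤ u n) (M : ℝ)
    (hb : ∀ n, u n ≤ M) : b ≤ limsup u atTop :=
  le_limsup_of_frequently_le h (bddAbove' u M hb)
lemma myfreq_lt_limsup (u : ℕ → ℝ) (b : ℝ) (hb : ∀ n, 0 ≤ u n) (h : b < limsup u atTop) :
    ∃ᶠ n in atTop, b < u n :=
  frequently_lt_of_lt_limsup (bddBelow' u hb).isCoboundedUnder_le h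
lemma myfreq_liminf_lt (u : ℕ → ℝ) (b M : ℝ) (hb : ∀ n, u n ≤ M) (h : liminf u atTop < b) :
    ∃ᶠ n in atTop, u n < b :=
  frequently_lt_of_liminf_lt (bddAbove' u M hb).isCoboundedUnder_ge h
lemma mylimsup_le (u : ℕ → ℝ) (b : ℝ) (hb : ∀ n, 0 ≤ u n) (h : ∀ᶠ n in atTop, u n ≤ b) :
    limsup u atTop ≤ b :=
  limsup_le_of_le (bddBelow' u hb).isCoboundedUnder_le h
lemma myle_liminf (u : ℕ → ℝ) (b : ℝ) (hb : ∀ n, b ≤ u n) (M : ℝ) (hM : ∀ n, u n ≤ M) :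
    b ≤ liminf u atTop :=
  le_liminf_of_le (bddAbove' u M hM).isCoboundedUnder_ge (Eventually.of_forall hb)

/-- The ergodic average. -/
noncomputable def avg (f : ℕ → ℝ) (N : ℕ) : ℝ := (∑ n ∈ Finset.Icc 1 N, f n) / N

/-- Real-valued count of members of `S` in `[1,N]`. -/
noncomputable def cnt (S : Set ℕ) (N : ℕ) : ℝ :=
  (((Finset.Icc 1 N).filter (fun n => n ∈ S)).card : ℝ)

lemma upperDensity_eq (S : Set ℕ) :
    upperDensity S = limsup (fun N : ℕ => cnt S N / N) atTop := rfl

lemma cnt_nonneg (S : Set ℕ) (N : ℕ) : 0 ≤ cnt S N := Nat.cast_nonneg _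

lemma cnt_le (S : Set ℕ) (N : ℕ) : cnt S N ≤ N := by
  have h : ((Finset.Icc 1 N).filter (fun n => n ∈ S)).card ≤ N := by
    calc ((Finset.Icc 1 N).filter (fun n => n ∈ S)).card ≤ (Finset.Icc 1 N).card :=
          Finset.card_filter_le _ _
    _ = N := by rw [Nat.card_Icc]; omega
  unfold cnt; exact_mod_cast h

lemma ratio_nonneg (S : Set ℕ) (N : ℕ) : 0 ≤ cnt S N / N := by
  apply div_nonneg (cnt_nonneg S N) (Nat.cast_nonneg _)

lemma ratio_le_one (S : Set ℕ) (N : ℕ) : cnt S N / N ≤ 1 := by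
  rcases Nat.eq_zero_or_pos N with h | h
  · simp [h, cnt]
  · rw [div_le_one (by exact_mod_cast h)]
    exact cnt_le S N

lemma upperDensity_le_one (S : Set ℕ) : upperDensity S ≤ 1 :=
  mylimsup_le _ 1 (ratio_nonneg S) (Eventually.of_forall (ratio_le_one S))

lemma avg_nonneg (f : ℕ → ℝ) (hf : ∀ n, 0 ≤ f n) (N : ℕ) : 0 ≤ avg f N := by
  apply div_nonneg (Finset.sum_nonneg fun n _ => hf n) (Nat.cast_nonneg _)

lemma sum_le_card_mul (f : ℕ → ℝ) (M : ℝ) (hM : ∀ n, f n ≤ M) (s : Finset ℕ) :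
    ∑ n ∈ s, f n ≤ (s.card : ℝ) * M := by
  calc ∑ n ∈ s, f n ≤ ∑ _n ∈ s, M := Finset.sum_le_sum fun n _ => hM n
  _ = (s.card : ℝ) * M := by rw [Finset.sum_const, nsmul_eq_mul]

lemma avg_le (f : ℕ → ℝ) (M : ℝ) (hM0 : 0 ≤ M) (hM : ∀ n, f n ≤ M) (N : ℕ) : avg f N ≤ M := by
  rcases Nat.eq_zero_or_pos N with h | h
  · simp [h, avg, hM0]
  · have hN : (0:ℝ) < N := by exact_mod_cast h
    rw [avg, div_le_iff₀ hN]
    calc ∑ n ∈ Finset.Icc 1 N, f n ≤ ((Finset.Icc 1 N).card : ℝ) * M :=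
          sum_le_card_mul f M hM _
    _ = M * N := by rw [Nat.card_Icc, Nat.add_sub_cancel, mul_comm]

/-- Markov / lower bound: if `f ≥ s` on `S` then `s * cnt S N ≤ ∑`. -/
lemma mul_cnt_le_sum (f : ℕ → ℝ) (hf : ∀ n, 0 ≤ f n) (S : Set ℕ) (s : ℝ) (hs : 0 ≤ s)
    (hS : ∀ n ∈ S, s ≤ f n) (N : ℕ) :
    s * cnt S N ≤ ∑ n ∈ Finset.Icc 1 N, f n := by
  have h1 : s * cnt S N ≤ ∑ n ∈ (Finset.Icc 1 N).filter (fun n => n ∈ S), f n := by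
    rw [mul_comm, cnt]
    calc (((Finset.Icc 1 N).filter (fun n => n ∈ S)).card : ℝ) * s
        = ∑ _n ∈ (Finset.Icc 1 N).filter (fun n => n ∈ S), s := by
          rw [Finset.sum_const, nsmul_eq_mul]
    _ ≤ _ := Finset.sum_le_sum fun n hn => hS n (Finset.mem_filter.mp hn).2
  exact h1.trans (Finset.sum_le_sum_of_subset_of_nonneg (Finset.filter_subset _ _)
    fun n _ _ => hf n)

lemma mul_ratio_le_avg (f : ℕ → ℝ) (hf : ∀ n, 0 ≤ f n) (S : Set ℕ) (s : ℝ) (hs : 0 ≤ s)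
    (hS : ∀ n ∈ S, s ≤ f n) (N : ℕ) :
    s * (cnt S N / N) ≤ avg f N := by
  rcases Nat.eq_zero_or_pos N with h | h
  · simp [h, avg]
  · have hN : (0:ℝ) < N := by exact_mod_cast h
    rw [avg, mul_div_assoc'] 
    exact div_le_div_of_nonneg_right (mul_cnt_le_sum f hf S s hs hS N) hN.le

lemma sum_filter_le (f : ℕ → ℝ) (P : ℕ → Prop) (ε : ℝ) (hP : ∀ n, P n → f n ≤ ε)
    (s : Finset ℕ) : ∑ n ∈ s.filter P, f n ≤ ((s.filter P).card : ℝ) * ε := by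
  calc ∑ n ∈ s.filter P, f n ≤ ∑ _n ∈ s.filter P, ε :=
        Finset.sum_le_sum fun n hn => hP n (Finset.mem_filter.mp hn).2
  _ = _ := by rw [Finset.sum_const, nsmul_eq_mul]

/-- Split bound: `∑ ≤ ε N + M ⋅ #(bad)` where bad = `¬ P`. -/
lemma sum_le_split (f : ℕ → ℝ) (P : ℕ → Prop) (ε M : ℝ) (hε : 0 ≤ ε) (hM0 : 0 ≤ M)
    (hM : ∀ n, f n ≤ M) (hP : ∀ n, P n → f n ≤ ε) (N : ℕ) :
    ∑ n ∈ Finset.Icc 1 N, f n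
      ≤ ε * N + M * (((Finset.Icc 1 N).filter (fun n => ¬ P n)).card : ℝ) := by
  rw [← Finset.sum_filter_add_sum_filter_not (Finset.Icc 1 N) P f]
  have h1 : ∑ n ∈ (Finset.Icc 1 N).filter P, f n ≤ ε * N := by
    calc ∑ n ∈ (Finset.Icc 1 N).filter P, f n
        ≤ (((Finset.Icc 1 N).filter P).card : ℝ) * ε :=
          sum_filter_le f P ε hP _
    _ ≤ ε * N := by
        rw [mul_comm]
        apply mul_le_mul_of_nonneg_left _ hε
        have h : ((Finset.Icc 1 N).filter P).card ≤ N := by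
          calc ((Finset.Icc 1 N).filter P).card ≤ (Finset.Icc 1 N).card :=
                Finset.card_filter_le _ _
          _ = N := by rw [Nat.card_Icc]; omega
        exact_mod_cast h
  have h2 : ∑ n ∈ (Finset.Icc 1 N).filter (fun n => ¬ P n), f n
      ≤ M * (((Finset.Icc 1 N).filter (fun n => ¬ P n)).card : ℝ) := by
    rw [mul_comm]
    exact sum_le_card_mul f M hM _
  linarith


/-- Average is at most `ε` plus `M` times the ratio of points where `f ≥ ε`. -/
lemma avg_le_add (f : ℕ → ℝ) (ε M : ℝ) (hε : 0 ≤ ε) (hM0 : 0 ≤ M) (hM : ∀ n, f n ≤ M)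
    (N : ℕ) : avg f N ≤ ε + M * (cnt {n | ε ≤ f n} N / N) := by
  rcases Nat.eq_zero_or_pos N with h | h
  · simp [h, avg, cnt]
    positivity
  have hN : (0:ℝ) < N := by exact_mod_cast h
  have hsum : ∑ n ∈ Finset.Icc 1 N, f n ≤ ε * N + M * cnt {n | ε ≤ f n} N := by
    rw [← Finset.sum_filter_add_sum_filter_not (Finset.Icc 1 N) (fun n => n ∈ {n | ε ≤ f n}) f]
    have h1 : ∑ n ∈ (Finset.Icc 1 N).filter (fun n => n ∈ {n | ε ≤ f n}), f n
        ≤ M * cnt {n | ε ≤ f n} N := by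
      rw [cnt, mul_comm]
      exact sum_le_card_mul f M hM _
    have h2 : ∑ n ∈ (Finset.Icc 1 N).filter (fun n => ¬ (n ∈ {n | ε ≤ f n})), f n
        ≤ ε * N := by
      calc ∑ n ∈ (Finset.Icc 1 N).filter (fun n => ¬ (n ∈ {n | ε ≤ f n})), f n
          ≤ ∑ _n ∈ (Finset.Icc 1 N).filter (fun n => ¬ (n ∈ {n | ε ≤ f n})), ε :=
            Finset.sum_le_sum fun n hn => le_of_lt (not_le.mp (Finset.mem_filter.mp hn).2)
      _ = (((Finset.Icc 1 N).filter (fun n => ¬ (n ∈ {n | ε ≤ f n}))).card : ℝ) * ε := by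
            rw [Finset.sum_const, nsmul_eq_mul]
      _ ≤ ε * N := by
          rw [mul_comm]
          apply mul_le_mul_of_nonneg_left _ hε
          have hc : ((Finset.Icc 1 N).filter (fun n => ¬ (n ∈ {n | ε ≤ f n}))).card ≤ N := by
            calc _ ≤ (Finset.Icc 1 N).card := Finset.card_filter_le _ _
            _ = N := by rw [Nat.card_Icc]; omega
          exact_mod_cast hc
    linarith
  rw [avg, div_le_iff₀ hN, add_mul]
  have hc : M * (cnt {n | ε ≤ f n} N / N) * N = M * cnt {n | ε ≤ f n} N := by field_simp
  rw [hc]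
  linarith

/-- Forward direction, limsup part. -/
lemma limsup_avg_pos (f : ℕ → ℝ) (M : ℝ) (hf : ∀ n, 0 ≤ f n) (hM0 : 0 ≤ M)
    (hM : ∀ n, f n ≤ M) (s : ℝ) (hs : 0 < s) (S' : Set ℕ) (hd : 0 < upperDensity S')
    (hS' : ∀ n ∈ S', s ≤ f n) : 0 < limsup (avg f) atTop := by
  have hfreq : ∃ᶠ N in atTop, upperDensity S' / 2 < cnt S' N / N := by
    apply myfreq_lt_limsup _ _ (ratio_nonneg S')
    rw [← upperDensity_eq]; linarith
  have hfreq2 : ∃ᶠ N in atTop, s * (upperDensity S' / 2) ≤ avg f N := by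
    apply hfreq.mono
    intro N hN
    calc s * (upperDensity S' / 2) ≤ s * (cnt S' N / N) :=
          mul_le_mul_of_nonneg_left hN.le hs.le
    _ ≤ avg f N := mul_ratio_le_avg f hf S' s hs.le hS' N
  have h := myle_limsup (avg f) _ hfreq2 M (avg_le f M hM0 hM)
  have h2 : 0 < s * (upperDensity S' / 2) := by positivity
  linarith

/-- Backward direction, limsup part. -/
lemma exists_S'_of_limsup_pos (f : ℕ → ℝ) (M : ℝ) (hf : ∀ n, 0 ≤ f n) (hM0 : 0 < M)
    (hM : ∀ n, f n ≤ M) (hpos : 0 < limsup (avg f) atTop) :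
    ∃ s > (0:ℝ), ∃ S' : Set ℕ, 0 < upperDensity S' ∧ ∀ n ∈ S', s ≤ f n := by
  set L := limsup (avg f) atTop with hL
  refine ⟨L/2, by positivity, {n | L/2 ≤ f n}, ?_, fun n hn => hn⟩
  have hfreq : ∃ᶠ N in atTop, 3*L/4 < avg f N :=
    myfreq_lt_limsup _ _ (avg_nonneg f hf) (by linarith)
  have key : ∀ N : ℕ, avg f N ≤ L/2 + M * (cnt {n | L/2 ≤ f n} N / N) :=
    avg_le_add f (L/2) M (by positivity) hM0.le hM
  have hfreq2 : ∃ᶠ N in atTop, L/(4*M) ≤ cnt {n | L/2 ≤ f n} N / N := by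
    apply hfreq.mono
    intro N hN
    have h1 := key N
    rw [div_le_iff₀ (by positivity : (0:ℝ) < 4*M)]
    nlinarith [ratio_nonneg {n | L/2 ≤ f n} N]
  have h := myle_limsup _ _ hfreq2 1 (ratio_le_one {n | L/2 ≤ f n})
  rw [upperDensity_eq]
  have h2 : 0 < L/(4*M) := by positivity
  linarith

/-- Forward direction, liminf part. -/
lemma liminf_avg_zero (f : ℕ → ℝ) (M : ℝ) (hf : ∀ n, 0 ≤ f n) (hM0 : 0 < M)
    (hM : ∀ n, f n ≤ M) (S : Set ℕ) (hd : upperDensity S = 1)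
    (hconv : ∀ ε > (0:ℝ), ∃ N₀ : ℕ, ∀ n ∈ S, N₀ ≤ n → f n < ε) :
    liminf (avg f) atTop = 0 := by
  have hge : (0:ℝ) ≤ liminf (avg f) atTop :=
    myle_liminf (avg f) 0 (avg_nonneg f hf) M (avg_le f M hM0.le hM)
  have hle : ∀ ε > (0:ℝ), liminf (avg f) atTop ≤ ε := by
    intro ε hε
    obtain ⟨N₀, hN₀⟩ := hconv (ε/3) (by positivity)
    set δ := ε/(3*M) with hδdef
    have hδ : 0 < δ := by positivity
    have hfreq : ∃ᶠ N in atTop, 1 - δ < cnt S N / N := by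
      apply myfreq_lt_limsup _ _ (ratio_nonneg S)
      rw [← upperDensity_eq, hd]; linarith
    have hev : ∀ᶠ N : ℕ in atTop, (3*M*N₀/ε : ℝ) ≤ N ∧ 1 ≤ N := by
      filter_upwards [eventually_ge_atTop (max (Nat.ceil (3*M*(N₀:ℝ)/ε)) 1)] with N hN
      constructor
      · have h1 : Nat.ceil (3*M*(N₀:ℝ)/ε) ≤ N := le_trans (le_max_left _ _) hN
        calc (3*M*(N₀:ℝ)/ε) ≤ Nat.ceil (3*M*(N₀:ℝ)/ε) := Nat.le_ceil _
        _ ≤ N := by exact_mod_cast h1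
      · exact le_trans (le_max_right _ _) hN
    apply myliminf_le _ _ ((hfreq.and_eventually hev).mono ?_) (avg_nonneg f hf)
    rintro N ⟨h1, h2, h3⟩
    have hNpos : (0:ℝ) < N := by
      have h0 : 0 < N := h3
      exact_mod_cast h0
    obtain ⟨P, hPdef⟩ : ∃ P : ℕ → Prop, P = fun n => n ∈ S ∧ N₀ ≤ n := ⟨_, rfl⟩
    obtain ⟨Q, hQdef⟩ : ∃ Q : ℕ → Prop, Q = fun n => ¬ (n ∈ S) := ⟨_, rfl⟩
    have hsplit := sum_le_split f P (ε/3) M (by positivity) hM0.le hM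
      (fun n hn => by rw [hPdef] at hn; exact (hN₀ n hn.1 hn.2).le) N
    have hsub : (Finset.Icc 1 N).filter (fun n => ¬ P n)
        ⊆ ((Finset.Icc 1 N).filter Q) ∪ Finset.Icc 1 N₀ := by
      intro n hn
      simp only [Finset.mem_filter, Finset.mem_union, Finset.mem_Icc, hPdef, hQdef,
        not_and, not_le] at hn ⊢
      rcases Classical.em (n ∈ S) with hmem | hmem
      · right; have := hn.2 hmem; omega
      · left; exact ⟨hn.1, hmem⟩
    have hcardN : (((Finset.Icc 1 N).filter (fun n => ¬ P n)).card : ℝ)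
        ≤ (((Finset.Icc 1 N).filter Q).card : ℝ) + N₀ := by
      have hc : ((Finset.Icc 1 N).filter (fun n => ¬ P n)).card
          ≤ ((Finset.Icc 1 N).filter Q).card + N₀ := by
        calc ((Finset.Icc 1 N).filter (fun n => ¬ P n)).card
            ≤ (((Finset.Icc 1 N).filter Q) ∪ Finset.Icc 1 N₀).card :=
              Finset.card_le_card hsub
        _ ≤ ((Finset.Icc 1 N).filter Q).card + (Finset.Icc 1 N₀).card :=
              Finset.card_union_le _ _
        _ = _ := by rw [Nat.card_Icc]; omega
      exact_mod_cast hc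
    have hcompl : (((Finset.Icc 1 N).filter Q).card : ℝ) = N - cnt S N := by
      have h := Finset.card_filter_add_card_filter_not
        (s := Finset.Icc 1 N) (p := fun n => n ∈ S)
      have hIcc : (Finset.Icc 1 N).card = N := by rw [Nat.card_Icc]; omega
      rw [hIcc] at h
      have hQeq : (Finset.Icc 1 N).filter Q
          = (Finset.Icc 1 N).filter (fun n => ¬ (n ∈ S)) := by
        apply Finset.filter_congr
        intro n _
        rw [hQdef]
      have hR : ((((Finset.Icc 1 N).filter (fun n => n ∈ S)).card : ℝ)
          + (((Finset.Icc 1 N).filter (fun n => ¬ (n ∈ S))).card : ℝ)) = N := by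
        exact_mod_cast h
      rw [cnt, hQeq]
      linarith
    have hcnt : (1-δ)*(N:ℝ) < cnt S N := (lt_div_iff₀ hNpos).mp h1
    have hbadR : (((Finset.Icc 1 N).filter (fun n => ¬ P n)).card : ℝ) ≤ δ*N + N₀ := by
      rw [hcompl] at hcardN
      linarith
    rw [avg, div_le_iff₀ hNpos]
    have hMδ : M * δ = ε/3 := by
      rw [hδdef]; field_simp
    have hMN₀ : M * N₀ ≤ ε/3 * N := by
      rw [div_le_iff₀ hε] at h2
      nlinarith
    have hbadM : M * (((Finset.Icc 1 N).filter (fun n => ¬ P n)).card : ℝ)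
        ≤ M * (δ*N + N₀) := mul_le_mul_of_nonneg_left hbadR hM0.le
    have e1 : M*(δ*(N:ℝ) + N₀) = (M*δ)*N + M*N₀ := by ring
    rw [hMδ] at e1
    linarith
  have h2 : liminf (avg f) atTop ≤ 0 := by
    apply le_of_forall_pos_le_add
    intro ε hε
    rw [zero_add]
    exact hle ε hε
  linarith


lemma card_le_three (s : Finset ℕ) (Q P : ℕ → Prop) :
    s.card ≤ (s.filter (fun n => Q n ∧ P n)).card + (s.filter (fun n => ¬ Q n)).card
      + (s.filter (fun n => ¬ P n)).card := by
  have hsub : s ⊆ (s.filter (fun n => Q n ∧ P n))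
      ∪ ((s.filter (fun n => ¬ Q n)) ∪ (s.filter (fun n => ¬ P n))) := by
    intro n hn
    simp only [Finset.mem_union, Finset.mem_filter]
    by_cases hQ : Q n
    · by_cases hP : P n
      · exact Or.inl ⟨hn, hQ, hP⟩
      · exact Or.inr (Or.inr ⟨hn, hP⟩)
    · exact Or.inr (Or.inl ⟨hn, hQ⟩)
  calc s.card ≤ _ := Finset.card_le_card hsub
  _ ≤ (s.filter (fun n => Q n ∧ P n)).card
      + ((s.filter (fun n => ¬ Q n)) ∪ (s.filter (fun n => ¬ P n))).card :=
        Finset.card_union_le _ _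
  _ ≤ _ := by
      have := Finset.card_union_le (s.filter (fun n => ¬ Q n)) (s.filter (fun n => ¬ P n))
      omega

set_option maxHeartbeats 1000000 in
/-- Backward direction, liminf part: construction of the density-one set. -/
lemma exists_S_of_liminf_zero (f : ℕ → ℝ) (M : ℝ) (hf : ∀ n, 0 ≤ f n) (hM1 : 1 ≤ M)
    (hM : ∀ n, f n ≤ M) (h0 : liminf (avg f) atTop = 0) :
    ∃ S : Set ℕ, upperDensity S = 1 ∧
      ∀ ε > (0:ℝ), ∃ N₀ : ℕ, ∀ n ∈ S, N₀ ≤ n → f n < ε := by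
  have hM0 : (0:ℝ) < M := lt_of_lt_of_le one_pos hM1
  have key : ∀ k m : ℕ, ∃ N : ℕ, m ≤ N ∧ avg f N < 1/((k:ℝ)+1)^2 := by
    intro k m
    have h1 : liminf (avg f) atTop < 1/((k:ℝ)+1)^2 := by rw [h0]; positivity
    have h2 := myfreq_liminf_lt (avg f) _ M (avg_le f M hM0.le hM) h1
    rw [frequently_atTop] at h2
    obtain ⟨N, hN1, hN2⟩ := h2 m
    exact ⟨N, hN1, hN2⟩
  choose F hF1 hF2 using key
  obtain ⟨g, ha, hb⟩ : ∃ g : ℕ → ℕ, (∀ k, (k+1) * (g k + 1) ≤ g (k+1))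
      ∧ (∀ k, avg f (g (k+1)) < 1/((k:ℝ)+1)^2) :=
    ⟨fun k => Nat.rec 0 (fun k Nk => F k ((k+1) * (Nk + 1))) k,
      fun k => hF1 _ _, fun k => hF2 _ _⟩
  have hmono : StrictMono g := by
    apply strictMono_nat_of_lt_succ
    intro k
    have h1 := ha k
    have h2 : g k + 1 ≤ (k+1) * (g k + 1) := Nat.le_mul_of_pos_left _ k.succ_pos
    omega
  have hgpos : ∀ k, 1 ≤ g (k+1) := by
    intro k
    have h1 := ha k
    have h2 : 0 < (k+1) * (g k + 1) := Nat.mul_pos (Nat.succ_pos k) (Nat.succ_pos (g k))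
    omega
  set S : Set ℕ := {n | ∃ k, g k < n ∧ n ≤ g (k+1) ∧ f n < 1/((k:ℝ)+1)} with hSdef
  have est : ∀ k : ℕ, 1 - 2/((k:ℝ)+1) ≤ cnt S (g (k+1)) / (g (k+1)) := by
    intro k
    have hN1 : 1 ≤ g (k+1) := hgpos k
    have hNR : (0:ℝ) < (g (k+1) : ℝ) := by exact_mod_cast hN1
    have hkR : (0:ℝ) < (k:ℝ)+1 := by positivity
    obtain ⟨P, hPdef⟩ : ∃ P : ℕ → Prop, P = fun n => f n < 1/((k:ℝ)+1) := ⟨_, rfl⟩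
    obtain ⟨Q, hQdef⟩ : ∃ Q : ℕ → Prop, Q = fun n => g k < n := ⟨_, rfl⟩
    have hcard3 := card_le_three (Finset.Icc 1 (g (k+1))) Q P
    have hIcc : (Finset.Icc 1 (g (k+1))).card = g (k+1) := by rw [Nat.card_Icc]; omega
    rw [hIcc] at hcard3
    have h1R : (((Finset.Icc 1 (g (k+1))).filter (fun n => Q n ∧ P n)).card : ℝ)
        ≤ cnt S (g (k+1)) := by
      rw [cnt]
      apply Nat.cast_le.mpr
      apply Finset.card_le_card
      intro n hn
      simp only [Finset.mem_filter, Finset.mem_Icc] at hn ⊢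
      refine ⟨hn.1, ?_⟩
      have hQn : g k < n := by rw [hQdef] at hn; exact hn.2.1
      have hPn : f n < 1/((k:ℝ)+1) := by rw [hPdef] at hn; exact hn.2.2
      exact ⟨k, hQn, hn.1.2, hPn⟩
    have h2 : ((Finset.Icc 1 (g (k+1))).filter (fun n => ¬ Q n)).card ≤ g k := by
      have hsub2 : (Finset.Icc 1 (g (k+1))).filter (fun n => ¬ Q n) ⊆ Finset.Icc 1 (g k) := by
        intro n hn
        simp only [Finset.mem_filter, Finset.mem_Icc] at hn ⊢
        have hq : ¬ (g k < n) := by rw [hQdef] at hn; exact hn.2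
        omega
      calc _ ≤ (Finset.Icc 1 (g k)).card := Finset.card_le_card hsub2
      _ = g k := by rw [Nat.card_Icc]; omega
    have h3 : (((Finset.Icc 1 (g (k+1))).filter (fun n => ¬ P n)).card : ℝ)
        ≤ ((g (k+1) : ℝ))/((k:ℝ)+1) := by
      have hB : (1/((k:ℝ)+1))
          * (((Finset.Icc 1 (g (k+1))).filter (fun n => ¬ P n)).card : ℝ)
          ≤ ∑ n ∈ Finset.Icc 1 (g (k+1)), f n := by
        rw [mul_comm]
        calc (((Finset.Icc 1 (g (k+1))).filter (fun n => ¬ P n)).card : ℝ)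
              * (1/((k:ℝ)+1))
            = ∑ _n ∈ (Finset.Icc 1 (g (k+1))).filter (fun n => ¬ P n), 1/((k:ℝ)+1) := by
              rw [Finset.sum_const, nsmul_eq_mul]
        _ ≤ ∑ n ∈ (Finset.Icc 1 (g (k+1))).filter (fun n => ¬ P n), f n := by
              apply Finset.sum_le_sum
              intro n hn
              have hp := (Finset.mem_filter.mp hn).2
              rw [hPdef] at hp
              exact not_lt.mp hp
        _ ≤ ∑ n ∈ Finset.Icc 1 (g (k+1)), f n :=
              Finset.sum_le_sum_of_subset_of_nonneg (Finset.filter_subset _ _)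
                (fun n _ _ => hf n)
      have hsum : ∑ n ∈ Finset.Icc 1 (g (k+1)), f n
          < ((g (k+1) : ℝ))/((k:ℝ)+1)^2 := by
        have hbk := hb k
        rw [avg, div_lt_iff₀ hNR] at hbk
        have he : ((g (k+1) : ℝ))/((k:ℝ)+1)^2 = 1/((k:ℝ)+1)^2 * (g (k+1) : ℝ) := by ring
        linarith
      set B := (((Finset.Icc 1 (g (k+1))).filter (fun n => ¬ P n)).card : ℝ) with hBdef
      have e0 : ((k:ℝ)+1) * ((1/((k:ℝ)+1)) * B) = B := by field_simp
      have e1 := mul_le_mul_of_nonneg_left hB hkR.le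
      have e2 := mul_lt_mul_of_pos_left hsum hkR
      have e3 : ((k:ℝ)+1) * ((g (k+1) : ℝ)/((k:ℝ)+1)^2)
          = (g (k+1) : ℝ)/((k:ℝ)+1) := by
        field_simp
      rw [e0] at e1
      rw [e3] at e2
      linarith
    have h4 : (g k : ℝ) ≤ (g (k+1) : ℝ)/((k:ℝ)+1) := by
      have hak := ha k
      have hc : ((k:ℝ)+1) * ((g k : ℝ)+1) ≤ (g (k+1) : ℝ) := by exact_mod_cast hak
      rw [le_div_iff₀ hkR]
      nlinarith
    have hcard3R : (g (k+1) : ℝ)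
        ≤ (((Finset.Icc 1 (g (k+1))).filter (fun n => Q n ∧ P n)).card : ℝ)
          + (((Finset.Icc 1 (g (k+1))).filter (fun n => ¬ Q n)).card : ℝ)
          + (((Finset.Icc 1 (g (k+1))).filter (fun n => ¬ P n)).card : ℝ) := by
      exact_mod_cast hcard3
    have h2R : (((Finset.Icc 1 (g (k+1))).filter (fun n => ¬ Q n)).card : ℝ)
        ≤ (g k : ℝ) := by exact_mod_cast h2
    rw [le_div_iff₀ hNR]
    have he : (1 - 2/((k:ℝ)+1)) * (g (k+1) : ℝ)
        = (g (k+1) : ℝ) - 2*((g (k+1) : ℝ)/((k:ℝ)+1)) := by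
      field_simp
    linarith
  refine ⟨S, ?_, ?_⟩
  · refine le_antisymm (upperDensity_le_one _) ?_
    have main : ∀ δ : ℝ, 0 < δ → 1 - δ ≤ upperDensity S := by
      intro δ hδ
      rw [upperDensity_eq]
      apply myle_limsup _ _ ?_ 1 (ratio_le_one _)
      rw [frequently_atTop]
      intro m
      set k := max m (Nat.ceil (2/δ)) with hkdef
      refine ⟨g (k+1), ?_, ?_⟩
      · calc m ≤ k := le_max_left _ _
        _ ≤ k+1 := by omega
        _ ≤ g (k+1) := hmono.le_apply
      · have hk1 : (2:ℝ)/((k:ℝ)+1) ≤ δ := by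
          have hc1 : (2/δ : ℝ) ≤ (k:ℝ)+1 := by
            calc (2/δ : ℝ) ≤ Nat.ceil (2/δ : ℝ) := Nat.le_ceil _
            _ ≤ (k:ℝ) := by
                have := le_max_right m (Nat.ceil (2/δ : ℝ))
                exact_mod_cast this
            _ ≤ (k:ℝ)+1 := by linarith
          rw [div_le_iff₀ (by positivity : (0:ℝ) < (k:ℝ)+1)]
          rw [div_le_iff₀ hδ] at hc1
          linarith
        have := est k
        linarith
    by_contra hcon
    push_neg at hcon
    have := main ((1 - upperDensity S)/2) (by linarith)
    linarith
  · intro ε hε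
    obtain ⟨K, hK⟩ := exists_nat_one_div_lt hε
    refine ⟨g K + 1, ?_⟩
    rintro n ⟨k, hk1, hk2, hk3⟩ hn
    have hKk : K ≤ k := by
      by_contra hlt
      push_neg at hlt
      have hle : g (k+1) ≤ g K := hmono.monotone (show k+1 ≤ K by omega)
      omega
    have hd : 1/((k:ℝ)+1) ≤ 1/((K:ℝ)+1) := by
      apply one_div_le_one_div_of_le (by positivity)
      have : (K:ℝ) ≤ (k:ℝ) := by exact_mod_cast hKk
      linarith
    calc f n < 1/((k:ℝ)+1) := hk3
    _ ≤ 1/((K:ℝ)+1) := hd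
    _ < ε := hK

end DC2Aux

open DC2Aux in
/-- A pair is DC2-scrambled (distance tends to `0` along a set of upper density `1`, and is
bounded below by some `s > 0` on a set of positive upper density) iff the ergodic averages of
the distance along the two orbits have lower limit `0` and positive upper limit. -/
theorem stmt4 {X : Type*} [MetricSpace X] [CompactSpace X] (T : X → X) (hT : Continuous T)
    (x y : X) :
    ((∃ S : Set ℕ, upperDensity S = 1 ∧
        ∀ ε > (0 : ℝ), ∃ N : ℕ, ∀ n ∈ S, N ≤ n → dist (T^[n] x) (T^[n] y) < ε) ∧
     (∃ s > (0 : ℝ), ∃ S' : Set ℕ, 0 < upperDensity S' ∧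
        ∀ n ∈ S', s ≤ dist (T^[n] x) (T^[n] y))) ↔
    (Filter.liminf
        (fun N : ℕ => (∑ n ∈ Finset.Icc 1 N, dist (T^[n] x) (T^[n] y)) / N) Filter.atTop = 0 ∧
     0 < Filter.limsup
        (fun N : ℕ => (∑ n ∈ Finset.Icc 1 N, dist (T^[n] x) (T^[n] y)) / N) Filter.atTop) := by
  obtain ⟨f, hfdef⟩ : ∃ f : ℕ → ℝ, f = fun n => dist (T^[n] x) (T^[n] y) := ⟨_, rfl⟩
  obtain ⟨C, hC⟩ := Metric.isBounded_iff.mp (isCompact_univ (X := X)).isBounded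
  have hf0 : ∀ n, 0 ≤ f n := fun n => by rw [hfdef]; exact dist_nonneg
  have hfM : ∀ n, f n ≤ max C 1 := fun n => by
    rw [hfdef]
    exact le_trans (hC trivial trivial) (le_max_left _ _)
  have hM1 : (1:ℝ) ≤ max C 1 := le_max_right _ _
  have hM0 : (0:ℝ) < max C 1 := lt_of_lt_of_le one_pos hM1
  have heq : (fun N : ℕ => (∑ n ∈ Finset.Icc 1 N, dist (T^[n] x) (T^[n] y)) / (N:ℝ))
      = avg f := by
    rw [hfdef]; rfl
  rw [heq]
  have heq2 : ∀ n : ℕ, dist (T^[n] x) (T^[n] y) = f n := fun n => by rw [hfdef]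
  simp only [heq2]
  constructor
  · rintro ⟨⟨S, hd, hconv⟩, ⟨s, hs, S', hd', hS'⟩⟩
    exact ⟨liminf_avg_zero f (max C 1) hf0 hM0 hfM S hd hconv,
      limsup_avg_pos f (max C 1) hf0 hM0.le hfM s hs S' hd' hS'⟩
  · rintro ⟨h1, h2⟩
    exact ⟨exists_S_of_liminf_zero f (max C 1) hf0 hM1 hfM h1,
      exists_S'_of_limsup_pos f (max C 1) hf0 hM0 hfM h2⟩
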